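/- For every commutative ring A, every family of weights R : ℤ → A, every m ≥ 1, all g_1, …, g_m ∈ A, every integer n ≥ 0 and every natural number j ≥ 1, the following unconditional difference identity holds: Γ_{2j}(n+1) − Γ_{2j}(n) = Σ_{i=1}^{j} (−1)^{i−1} · Π_{n,n+2j−2}(i) · (Γ_{2j−2i}(n+1) − Γ_{2j−2i}(n)) − Σ_{i=1}^{j} (−1)^{i} · R_n · Π_{n+1,n+2j−2}(i−1) · (Γ_{2j−2i}(n+2) − Γ_{2j−2i}(n)). -/

import Mathlib

open Finset

variable {A : Type*} [CommRing A]

/-- End height of a walk starting at a given height, with steps given by a list of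
Booleans (`true` = ascending step `+1`, `false` = descending step `-1`). -/
def walkEnd : ℤ → List Bool → ℤ
  | a, [] => a
  | a, true :: s => walkEnd (a + 1) s
  | a, false :: s => walkEnd (a - 1) s

/-- Weight of a walk: the product of `R h` over all descending steps `h → h - 1`. -/
def walkWeight (R : ℤ → A) : ℤ → List Bool → A
  | _, [] => 1
  | a, true :: s => walkWeight R (a + 1) s
  | a, false :: s => R a * walkWeight R (a - 1) s

/-- Whether every height visited by the walk (including the first and last) is `≥ c`. -/
def walkAbove (c : ℤ) : ℤ → List Bool → Bool
  | a, [] => decide (c ≤ a)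
  | a, true :: s => decide (c ≤ a) && walkAbove c (a + 1) s
  | a, false :: s => decide (c ≤ a) && walkAbove c (a - 1) s

/-- `Zw R a b k`: the generating function of walks of length `k` from height `a` to
height `b`, each walk weighted by `R h` per descending step from height `h`. -/
def Zw (R : ℤ → A) (a b : ℤ) (k : ℕ) : A :=
  ∑ s : Fin k → Bool,
    if walkEnd a (List.ofFn s) = b then walkWeight R a (List.ofFn s) else 0

/-- `Zwp R a b k`: the same generating function, restricted to walks staying at
heights `≥ a` ("positive walks"). -/
def Zwp (R : ℤ → A) (a b : ℤ) (k : ℕ) : A :=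
  ∑ s : Fin k → Bool,
    if walkEnd a (List.ofFn s) = b ∧ walkAbove a a (List.ofFn s) = true then
      walkWeight R a (List.ofFn s)
    else 0

/-- `Pdim R a b k`: hard-dimer partition function on the segment `[a,b]`: the sum over
`k`-element subsets `S` of `{a+1, …, b}` with no two consecutive elements of
`∏ i in S, R i` (a dimer on `[i-1,i]` carries weight `R i`). -/
noncomputable def Pdim (R : ℤ → A) (a b : ℤ) (k : ℕ) : A :=
  ∑ S ∈ Finset.powersetCard k (Finset.Icc (a + 1) b),
    if ∀ i ∈ S, i + 1 ∉ S then ∏ i ∈ S, R i else 0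

/-- `Vp R g m a b = Σ_{k=1}^{m} g_k • Zw R a b (2k-1)`: grand-canonical generating
function for walks of odd length from `a` to `b`. -/
def Vp (R : ℤ → A) (g : ℕ → A) (m : ℕ) (a b : ℤ) : A :=
  ∑ k ∈ Finset.Icc 1 m, g k * Zw R a b (2 * k - 1)

/-- The conserved quantities `Γ_{2i}(n)`; `Gam R g m i n` stands for `Γ_{2i}(n)`. -/
def Gam (R : ℤ → A) (g : ℕ → A) (m : ℕ) (i : ℕ) (n : ℤ) : A :=
  if i = 0 then R (n - 1) - Vp R g m (n - 1) (n - 2) + (if n = 0 then 1 else 0)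
  else
    Zwp R (n - 1) (n - 1) (2 * i) *
        (R (n - 1) - Vp R g m (n - 1) (n - 2) + (if n = 0 then 1 else 0)) -
      ∑ j ∈ Finset.Icc 1 i,
        Zwp R (n - 1) (n - 1 + 2 * (j : ℤ)) (2 * i) * Vp R g m (n + 2 * (j : ℤ) - 1) (n - 2)

/-- The symmetric conserved quantities `Γ̃_{2i}(n)`; `Gamt R g m i n` stands
for `Γ̃_{2i}(n)`. -/
def Gamt (R : ℤ → A) (g : ℕ → A) (m : ℕ) (i : ℕ) (n : ℤ) : A :=
  if i = 0 then R n - Vp R g m n (n - 1)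
  else
    (Zw R n (n - 1) (2 * i - 1) - R (n - 1) * R (n + 1) * Zw R (n - 2) (n + 1) (2 * i - 1)) *
        (R n - Vp R g m n (n - 1)) -
      ∑ j ∈ Finset.Icc 1 i,
        (Zw R (n - (j : ℤ)) (n + (j : ℤ) - 1) (2 * i - 1) -
            R (n - (j : ℤ) - 1) * R (n + (j : ℤ) + 1) *
              Zw R (n - (j : ℤ) - 2) (n + (j : ℤ) + 1) (2 * i - 1)) *
          Vp R g m (n + (j : ℤ)) (n - (j : ℤ) - 1)

/-- The master equation: `R i = 0` for `i < 0` and `R n = 1 + V'_{n,n-1}` for `n ≥ 0`. -/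
def MasterEq (R : ℤ → A) (g : ℕ → A) (m : ℕ) : Prop :=
  (∀ i : ℤ, i < 0 → R i = 0) ∧ ∀ n : ℤ, 0 ≤ n → R n = 1 + Vp R g m n (n - 1)

/-- `Zodd R a b i = Zw R a b (2i-1)`, with the convention that for `i = 0`
(walks of length `-1`) it equals `1` if `b = a - 1` and `0` otherwise. -/
def Zodd (R : ℤ → A) (a b : ℤ) (i : ℕ) : A :=
  if i = 0 then (if b = a - 1 then 1 else 0) else Zw R a b (2 * i - 1)

/-- Binomial coefficient with an integer lower index, with the convention that it
vanishes for negative lower index. -/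
def Cz (n : ℕ) (p : ℤ) : ℤ := if 0 ≤ p then n.choose p.toNat else 0

section Walks

lemma walkEnd_append (a : ℤ) (l₁ l₂ : List Bool) :
    walkEnd a (l₁ ++ l₂) = walkEnd (walkEnd a l₁) l₂ := by
  induction l₁ generalizing a with
  | nil => rfl
  | cons st s ih => cases st <;> simp [walkEnd, ih]

lemma walkWeight_append (R : ℤ → A) (a : ℤ) (l₁ l₂ : List Bool) :
    walkWeight R a (l₁ ++ l₂) = walkWeight R a l₁ * walkWeight R (walkEnd a l₁) l₂ := by
  induction l₁ generalizing a with
  | nil => simp [walkWeight, walkEnd]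
  | cons st s ih => cases st <;> simp [walkWeight, walkEnd, ih, mul_assoc]

lemma walkAbove_append (c a : ℤ) (l₁ l₂ : List Bool) :
    walkAbove c a (l₁ ++ l₂) = (walkAbove c a l₁ && walkAbove c (walkEnd a l₁) l₂) := by
  induction l₁ generalizing a with
  | nil =>
    simp only [List.nil_append, walkEnd]
    induction l₂ generalizing a with
    | nil => simp [walkAbove]
    | cons st s ih => cases st <;> simp [walkAbove] 
  | cons st s ih => cases st <;> simp [walkAbove, walkEnd, ih, Bool.and_assoc]

end Walks
section Walks2
variable {A : Type*} [CommRing A]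

lemma walkAbove_le_end {c a : ℤ} {l : List Bool} (h : walkAbove c a l = true) :
    c ≤ walkEnd a l := by
  induction l generalizing a with
  | nil => simpa [walkAbove, walkEnd] using h
  | cons st s ih =>
    cases st <;> simp only [walkAbove, Bool.and_eq_true, decide_eq_true_eq] at h <;>
      exact ih h.2

lemma walkEnd_le (a : ℤ) (l : List Bool) : walkEnd a l ≤ a + l.length := by
  induction l generalizing a with
  | nil => simp [walkEnd]
  | cons st s ih =>
    cases st <;> simp only [walkEnd, List.length_cons] <;>
      calc _ ≤ _ := ih _
      _ ≤ _ := by push_cast; omega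

/-- floor-constrained walk sum -/
def Zf (R : ℤ → A) (c a b : ℤ) (k : ℕ) : A :=
  ∑ s : Fin k → Bool,
    if walkEnd a (List.ofFn s) = b ∧ walkAbove c a (List.ofFn s) = true then
      walkWeight R a (List.ofFn s)
    else 0

lemma Zwp_eq_Zf (R : ℤ → A) (a b : ℤ) (k : ℕ) : Zwp R a b k = Zf R a a b k := rfl

lemma Zf_zero (R : ℤ → A) (c a b : ℤ) :
    Zf R c a b 0 = if a = b ∧ c ≤ a then 1 else 0 := by
  simp [Zf, walkEnd, walkAbove, walkWeight, List.ofFn_zero,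
    Finset.sum_const, decide_eq_true_eq]

lemma Zf_of_lt {c b : ℤ} (R : ℤ → A) (a : ℤ) (k : ℕ) (h : b < c) : Zf R c a b k = 0 := by
  apply Finset.sum_eq_zero
  intro s _
  rw [if_neg]
  rintro ⟨h1, h2⟩
  exact absurd (h1 ▸ walkAbove_le_end h2) (not_le.2 h)

lemma Zf_of_far {a b : ℤ} {k : ℕ} (R : ℤ → A) (c : ℤ) (h : a + k < b) : Zf R c a b k = 0 := by
  apply Finset.sum_eq_zero
  intro s _
  rw [if_neg]
  rintro ⟨h1, h2⟩
  have := walkEnd_le a (List.ofFn s)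
  rw [h1, List.length_ofFn] at this
  omega

lemma sum_snoc_bool (k : ℕ) (F : List Bool → A) :
    ∑ s : Fin (k+1) → Bool, F (List.ofFn s)
      = ∑ s : Fin k → Bool, (F (List.ofFn s ++ [false]) + F (List.ofFn s ++ [true])) := by
  rw [(Fintype.sum_equiv (Fin.snocEquiv (fun _ => Bool))
    (fun p => F (List.ofFn (Fin.snoc p.2 p.1))) (fun s => F (List.ofFn s)) (fun p => rfl)).symm]
  rw [Fintype.sum_prod_type_right]
  apply Finset.sum_congr rfl
  intro s _
  have h : ∀ x : Bool, List.ofFn (Fin.snoc s x) = List.ofFn s ++ [x] := by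
    intro x
    rw [List.ofFn_succ']
    simp [List.concat_eq_append, Fin.snoc_castSucc, Fin.snoc_last]
  rw [Fintype.sum_bool, h, h]
  exact add_comm _ _

lemma sum_cons_bool (k : ℕ) (F : List Bool → A) :
    ∑ s : Fin (k+1) → Bool, F (List.ofFn s)
      = ∑ s : Fin k → Bool, (F (false :: List.ofFn s) + F (true :: List.ofFn s)) := by
  rw [(Fintype.sum_equiv (Fin.consEquiv (fun _ => Bool))
    (fun p => F (List.ofFn (Fin.cons p.1 p.2))) (fun s => F (List.ofFn s)) (fun p => rfl)).symm]
  rw [Fintype.sum_prod_type_right]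
  apply Finset.sum_congr rfl
  intro s _
  have h : ∀ x : Bool, List.ofFn (Fin.cons x s) = x :: List.ofFn s := by
    intro x
    rw [List.ofFn_succ]
    simp
  rw [Fintype.sum_bool, h, h]
  exact add_comm _ _

end Walks2
section Steps
variable {A : Type*} [CommRing A]

lemma Zf_succ_last (R : ℤ → A) (c a b : ℤ) (k : ℕ) (hb : c ≤ b) :
    Zf R c a b (k+1) = Zf R c a (b-1) k + R (b+1) * Zf R c a (b+1) k := by
  have hs := sum_snoc_bool (A := A) k
    (fun l => if walkEnd a l = b ∧ walkAbove c a l = true then walkWeight R a l else 0)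
  rw [Zf, hs, Zf, Zf, Finset.mul_sum, ← Finset.sum_add_distrib]
  apply Finset.sum_congr rfl
  intro s _
  set l := List.ofFn s with hl
  rw [walkEnd_append a l [false], walkEnd_append a l [true],
    walkWeight_append R a l [false], walkWeight_append R a l [true],
    walkAbove_append c a l [false], walkAbove_append c a l [true]]
  simp only [walkEnd, walkWeight, walkAbove, Bool.and_eq_true, decide_eq_true_eq, mul_one]
  have hle : walkAbove c a l = true → c ≤ walkEnd a l := walkAbove_le_end
  by_cases hA : walkAbove c a l = true
  · have hce := hle hA
    by_cases hb1 : walkEnd a l = b + 1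
    · rw [if_pos ⟨by omega, hA, by omega, by omega⟩, if_neg (by rintro ⟨h,-⟩; omega),
        if_neg (by rintro ⟨h,-⟩; omega), if_pos ⟨hb1, hA⟩, hb1]
      ring
    · by_cases hb2 : walkEnd a l = b - 1
      · rw [if_neg (by rintro ⟨h,-,-,hc⟩; omega), if_pos ⟨by omega, hA, by omega, by omega⟩,
          if_pos ⟨hb2, hA⟩, if_neg (by rintro ⟨h,-⟩; omega)]
        ring
      · rw [if_neg (by rintro ⟨h,-⟩; omega), if_neg (by rintro ⟨h,-⟩; omega),
          if_neg (by rintro ⟨h,-⟩; omega), if_neg (by rintro ⟨h,-⟩; omega)]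
        ring
  · rw [if_neg (by rintro ⟨-,h,-⟩; exact hA h), if_neg (by rintro ⟨-,h,-⟩; exact hA h),
      if_neg (by rintro ⟨-,h⟩; exact hA h), if_neg (by rintro ⟨-,h⟩; exact hA h)]
    ring

end Steps
section ZwSteps
variable {A : Type*} [CommRing A]

lemma Zw_succ_last (R : ℤ → A) (a b : ℤ) (k : ℕ) :
    Zw R a b (k+1) = Zw R a (b-1) k + R (b+1) * Zw R a (b+1) k := by
  have hs := sum_snoc_bool (A := A) k
    (fun l => if walkEnd a l = b then walkWeight R a l else 0)
  rw [Zw, hs, Zw, Zw, Finset.mul_sum, ← Finset.sum_add_distrib]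
  apply Finset.sum_congr rfl
  intro s _
  set l := List.ofFn s with hl
  rw [walkEnd_append a l [false], walkEnd_append a l [true],
    walkWeight_append R a l [false], walkWeight_append R a l [true]]
  simp only [walkEnd, walkWeight, mul_one]
  by_cases hb1 : walkEnd a l = b + 1
  · rw [if_pos (by omega), if_neg (by omega), if_neg (by omega), if_pos hb1, hb1]
    ring
  · by_cases hb2 : walkEnd a l = b - 1
    · rw [if_neg (by omega), if_pos (by omega), if_pos hb2, if_neg (by omega)]
      ring
    · rw [if_neg (by omega), if_neg (by omega), if_neg (by omega), if_neg (by omega)]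
      ring

lemma Zw_succ_first (R : ℤ → A) (a b : ℤ) (k : ℕ) :
    Zw R a b (k+1) = Zw R (a+1) b k + R a * Zw R (a-1) b k := by
  have hs := sum_cons_bool (A := A) k
    (fun l => if walkEnd a l = b then walkWeight R a l else 0)
  rw [Zw, hs, Zw, Zw, Finset.mul_sum, ← Finset.sum_add_distrib]
  apply Finset.sum_congr rfl
  intro s _
  simp only [walkEnd, walkWeight, mul_ite, mul_zero]
  exact add_comm _ _

end ZwSteps
section PdimLemmas
variable {A : Type*} [CommRing A]

lemma Pdim_zero (R : ℤ → A) (a b : ℤ) : Pdim R a b 0 = 1 := by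
  simp [Pdim]

lemma Pdim_eq_zero (R : ℤ → A) {a b : ℤ} {i : ℕ} (hi : 1 ≤ i) (h : b + 1 < a + 2 * i) :
    Pdim R a b i = 0 := by
  apply Finset.sum_eq_zero
  intro S hS
  rw [Finset.mem_powersetCard] at hS
  rw [if_neg]
  intro hcond
  have hdisj : Disjoint S (S.image (· + 1)) := by
    rw [Finset.disjoint_left]
    intro x hx hx'
    obtain ⟨y, hy, hyx⟩ := Finset.mem_image.1 hx'
    exact hcond y hy (by rwa [hyx])
  have hsub : S ∪ S.image (· + 1) ⊆ Finset.Icc (a+1) (b+1) := by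
    intro x hx
    rcases Finset.mem_union.1 hx with hx | hx
    · have := hS.1 hx; rw [Finset.mem_Icc] at this ⊢; omega
    · obtain ⟨y, hy, hyx⟩ := Finset.mem_image.1 hx
      have := hS.1 hy; rw [Finset.mem_Icc] at this ⊢; omega
  have hcard := Finset.card_le_card hsub
  rw [Finset.card_union_of_disjoint hdisj,
    Finset.card_image_of_injective _ (add_left_injective 1), hS.2, Int.card_Icc] at hcard
  omega

lemma Pdim_rec (R : ℤ → A) {a b : ℤ} (e : ℕ) (h : a < b) :
    Pdim R a b (e+1) = Pdim R (a+1) b (e+1) + R (a+1) * Pdim R (a+2) b e := by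
  have hicc : Finset.Icc (a+1) b = insert (a+1) (Finset.Icc (a+2) b) := by
    ext x; simp only [Finset.mem_Icc, Finset.mem_insert]; omega
  have hnot : (a+1) ∉ Finset.Icc (a+2) b := by simp
  have hdisj : Disjoint (Finset.powersetCard (e+1) (Finset.Icc (a+2) b))
      ((Finset.powersetCard e (Finset.Icc (a+2) b)).image (insert (a+1))) := by
    rw [Finset.disjoint_left]
    intro S hS hS'
    obtain ⟨T, hT, hTS⟩ := Finset.mem_image.1 hS'
    rw [Finset.mem_powersetCard] at hS
    exact hnot (hS.1 (hTS ▸ Finset.mem_insert_self _ _))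
  have hsub : Finset.powersetCard e (Finset.Icc (a+3) b) ⊆
      Finset.powersetCard e (Finset.Icc (a+2) b) :=
    Finset.powersetCard_mono (by intro x hx; rw [Finset.mem_Icc] at hx ⊢; omega)
  rw [Pdim, hicc, Finset.powersetCard_succ_insert hnot, Finset.sum_union hdisj]
  congr 1
  · rw [Pdim, show a + 1 + 1 = a + 2 by ring]
  · rw [Finset.sum_image (by
      intro S hS T hT hST
      rw [Finset.mem_coe, Finset.mem_powersetCard] at hS hT
      have h1 : (a+1) ∉ S := fun hx => hnot (hS.1 hx)
      have h2 : (a+1) ∉ T := fun hx => hnot (hT.1 hx)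
      rw [← Finset.erase_insert h1, hST, Finset.erase_insert h2])]
    rw [Pdim, show a + 2 + 1 = a + 3 by ring, Finset.mul_sum]
    rw [← Finset.sum_subset hsub (by
      intro S hS hnS
      rw [Finset.mem_powersetCard] at hS hnS
      have ha2 : (a+2) ∈ S := by
        by_contra hx
        exact hnS ⟨fun y hy => by
          have h3 := hS.1 hy; rw [Finset.mem_Icc] at h3 ⊢
          have : y ≠ a + 2 := fun hh => hx (hh ▸ hy)
          omega, hS.2⟩
      rw [if_neg]
      intro hc
      apply hc (a+1) (Finset.mem_insert_self _ _)
      have he : a + 1 + 1 = a + 2 := by ring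
      rw [he]
      exact Finset.mem_insert_of_mem ha2)]
    apply Finset.sum_congr rfl
    intro S hS
    rw [Finset.mem_powersetCard] at hS
    have hge : ∀ y ∈ S, a + 3 ≤ y := fun y hy => (Finset.mem_Icc.1 (hS.1 hy)).1
    have hna : (a+1) ∉ S := fun hx => by have := hge _ hx; omega
    have hna2 : (a+2) ∉ S := fun hx => by have := hge _ hx; omega
    have hcond : (∀ y ∈ insert (a+1) S, y + 1 ∉ insert (a+1) S) ↔ (∀ y ∈ S, y + 1 ∉ S) := by
      constructor
      · intro hc y hy hy1
        exact hc y (Finset.mem_insert_of_mem hy) (Finset.mem_insert_of_mem hy1)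
      · intro hc y hy
        rcases Finset.mem_insert.1 hy with rfl | hy
        · intro hmem
          rcases Finset.mem_insert.1 hmem with heq | hmem
          · omega
          · exact hna2 (by rwa [show a+1+1 = a+2 by ring] at hmem)
        · intro hmem
          rcases Finset.mem_insert.1 hmem with heq | hmem
          · have := hge _ hy; omega
          · exact hc y hy hmem
    rw [Finset.prod_insert hna]
    simp only [hcond]
    split_ifs <;> ring

end PdimLemmas
section VpStar
variable {A : Type*} [CommRing A]

lemma Vp_star (R : ℤ → A) (g : ℕ → A) (m : ℕ) (a b : ℤ) :
    Vp R g m a (b-1) + R (b+1) * Vp R g m a (b+1)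
      = Vp R g m (a+1) b + R a * Vp R g m (a-1) b := by
  unfold Vp
  rw [Finset.mul_sum, Finset.mul_sum, ← Finset.sum_add_distrib, ← Finset.sum_add_distrib]
  apply Finset.sum_congr rfl
  intro k hk
  have hk1 : 1 ≤ k := (Finset.mem_Icc.1 hk).1
  have hrw : 2 * k = (2 * k - 1) + 1 := by omega
  have e1 := Zw_succ_last R a b (2*k-1)
  have e2 := Zw_succ_first R a b (2*k-1)
  rw [← hrw] at e1 e2
  linear_combination g k * e2 - g k * e1

end VpStar

section YLemma
variable {A : Type*} [CommRing A]

/-- the dimer-transformed positive walk sum -/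
noncomputable def Ysum (R : ℤ → A) (c b : ℤ) (d k : ℕ) : A :=
  ∑ i ∈ Finset.range (k+1),
    if 2*i ≤ k then (-1:A)^i * Pdim R c b i * Zf R c c (c + d) (k - 2*i) else 0

/-- its claimed evaluation -/
noncomputable def Ey (R : ℤ → A) (c b : ℤ) (d k : ℕ) : A :=
  if d ≤ k ∧ (k - d) % 2 = 0 then (-1:A)^((k-d)/2) * Pdim R (c+d+1) b ((k-d)/2) else 0

lemma Ysum_succ (R : ℤ → A) (c b : ℤ) (d k : ℕ) :
    Ysum R c b d (k+1)
      = (if d = 0 then 0 else Ysum R c b (d-1) k) + R (c+d+1) * Ysum R c b (d+1) k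
        + (if (k+1) % 2 = 0 ∧ d = 0 then (-1:A)^((k+1)/2) * Pdim R c b ((k+1)/2) else 0) := by
  rw [Ysum]
  have hexp : ∀ i ∈ Finset.range (k+2),
      (if 2*i ≤ k+1 then (-1:A)^i * Pdim R c b i * Zf R c c (c+(d:ℤ)) (k+1-2*i) else 0)
      = ((if 2*i ≤ k then (-1:A)^i * Pdim R c b i * Zf R c c (c+(d:ℤ)-1) (k-2*i) else 0)
        + R (c+d+1) * (if 2*i ≤ k then (-1:A)^i * Pdim R c b i * Zf R c c (c+(d:ℤ)+1) (k-2*i) else 0)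
        + (if 2*i = k+1 ∧ d = 0 then (-1:A)^i * Pdim R c b i else 0)) := by
    intro i _
    by_cases h1 : 2*i ≤ k
    · rw [if_pos (by omega), if_pos h1, if_pos h1, if_neg (by omega)]
      have hk1 : k + 1 - 2*i = (k - 2*i) + 1 := by omega
      rw [hk1, Zf_succ_last R c c (c+(d:ℤ)) (k-2*i) (by omega)]
      ring
    · by_cases h2 : 2*i = k+1
      · rw [if_pos (by omega), if_neg h1, if_neg h1, show k+1-2*i = 0 by omega, Zf_zero]
        by_cases hd : d = 0
        · subst hd
          rw [if_pos ⟨by simp, le_refl c⟩, if_pos ⟨h2, rfl⟩]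
          ring
        · rw [if_neg (by rintro ⟨h, -⟩; exact hd (by omega)),
            if_neg (by rintro ⟨-, h⟩; exact hd h)]
          ring
      · rw [if_neg (by omega), if_neg h1, if_neg h1, if_neg (by rintro ⟨h, -⟩; omega)]
        ring
  rw [Finset.sum_congr rfl hexp, Finset.sum_add_distrib, Finset.sum_add_distrib]
  congr 1
  · congr 1
    · -- first sum
      rw [Finset.sum_range_succ, if_neg (by omega), add_zero]
      by_cases hd : d = 0
      · rw [if_pos hd]
        apply Finset.sum_eq_zero
        intro i _
        subst hd
        simp only [Nat.cast_zero, add_zero]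
        rw [Zf_of_lt R c (k - 2*i) (show c - 1 < c by omega)]
        split_ifs <;> ring
      · rw [if_neg hd, Ysum, show (c + ((d-1 : ℕ) : ℤ)) = c + (d:ℤ) - 1 by
          have : 1 ≤ d := Nat.one_le_iff_ne_zero.2 hd
          push_cast [this]; ring]
    · rw [Finset.sum_range_succ, if_neg (by omega), mul_zero, add_zero, ← Finset.mul_sum,
        Ysum, show (c + ((d+1 : ℕ) : ℤ)) = c + (d:ℤ) + 1 by push_cast; ring]
  · by_cases hpar : (k+1) % 2 = 0 ∧ d = 0
    · rw [if_pos hpar, Finset.sum_eq_single ((k+1)/2)]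
      · rw [if_pos ⟨by omega, hpar.2⟩]
      · intro i _ hne
        rw [if_neg (by rintro ⟨h, -⟩; omega)]
      · intro h
        exact absurd (Finset.mem_range.2 (by omega)) h
    · rw [if_neg hpar]
      apply Finset.sum_eq_zero
      intro i _
      rw [if_neg (by rintro ⟨h1, h2⟩; exact hpar ⟨by omega, h2⟩)]

end YLemma
section YMain
variable {A : Type*} [CommRing A]

lemma Ey_of_gt (R : ℤ → A) (c b : ℤ) {d k : ℕ} (h : k < d) : Ey R c b d k = 0 := by
  rw [Ey, if_neg]; rintro ⟨h1, -⟩; omega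

lemma Ey_of_odd (R : ℤ → A) (c b : ℤ) {d k : ℕ} (h : (k - d) % 2 = 1) :
    Ey R c b d k = 0 := by
  rw [Ey, if_neg]; rintro ⟨-, h2⟩; omega

lemma Ey_val (R : ℤ → A) (c b : ℤ) {d k e : ℕ} (h : k = d + 2 * e) :
    Ey R c b d k = (-1:A)^e * Pdim R (c+d+1) b e := by
  rw [Ey, if_pos ⟨by omega, by omega⟩, show (k-d)/2 = e by omega]

lemma Ylem (R : ℤ → A) : ∀ (k : ℕ) (c b : ℤ) (d : ℕ), c + k ≤ b + 2 →
    Ysum R c b d k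
      = Ey R c b d k + (if d + 2 = k ∧ b + 2 = c + k then R (b+1) else 0) := by
  intro k
  induction k with
  | zero =>
    intro c b d hcb
    rw [Ysum, Finset.sum_range_one, if_pos (by omega), Zf_zero]
    by_cases hd : d = 0
    · subst hd
      rw [if_pos ⟨by simp, le_refl c⟩, Ey_val R c b (e := 0) rfl, if_neg (by omega)]
      simp [Pdim_zero]
    · rw [if_neg (by rintro ⟨h, -⟩; exact hd (by omega)), Ey_of_gt R c b (by omega),
        if_neg (by rintro ⟨h, -⟩; omega)]
      ring
  | succ k ih =>
    intro c b d hcb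
    have hsub : ∀ d' : ℕ, Ysum R c b d' k = Ey R c b d' k := by
      intro d'
      rw [ih c b d' (by omega), if_neg (by rintro ⟨-, h⟩; omega), add_zero]
    rw [Ysum_succ]
    by_cases hd : d = 0
    · subst hd
      rw [if_pos rfl, hsub 1]
      rcases Nat.even_or_odd k with ⟨e, hke⟩ | ⟨e, hke⟩
      · -- k even: everything vanishes
        have h1 : Ey R c b 1 k = 0 := by
          rcases Nat.lt_or_ge k 1 with h | h
          · exact Ey_of_gt R c b h
          · exact Ey_of_odd R c b (by omega)
        have h2 : Ey R c b 0 (k+1) = 0 := Ey_of_odd R c b (by omega)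
        rw [h1, h2, if_neg (by rintro ⟨h, -⟩; omega), if_neg (by rintro ⟨h, -⟩; omega)]
        ring
      · -- k odd, k = 2e+1
        rw [if_pos ⟨by omega, rfl⟩, show (k+1)/2 = e+1 by omega]
        have h1 : Ey R c b 1 k = (-1:A)^e * Pdim R (c+2) b e := by
          rw [Ey_val R c b (e := e) (by omega), show (c + ((1:ℕ):ℤ) + 1) = c + 2 by
            push_cast; ring]
        have h2 : Ey R c b 0 (k+1) = (-1:A)^(e+1) * Pdim R (c+1) b (e+1) := by
          rw [Ey_val R c b (e := e+1) (by omega), show (c + ((0:ℕ):ℤ) + 1) = c + 1 by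
            push_cast; ring]
        rw [h1, h2]
        rcases lt_or_ge c b with hlt | hge
        · rw [if_neg (by rintro ⟨h1, h2⟩; omega), Pdim_rec R (e := e) hlt]
          ring
        · -- c = b, k = 1, e = 0
          have hcb' : c = b := by omega
          have he : e = 0 := by omega
          have hk1 : k = 1 := by omega
          subst he hk1 hcb'
          rw [if_pos ⟨by omega, by omega⟩,
            Pdim_eq_zero R (i := 1) (le_refl 1) (by omega),
            Pdim_eq_zero R (i := 1) (le_refl 1) (by omega), Pdim_zero]
          ring
    · -- d ≥ 1
      rw [if_neg hd, if_neg (by rintro ⟨-, h⟩; exact hd h), add_zero, hsub, hsub]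
      rcases Nat.lt_or_ge (k+1) d with hgt | hle
      · rw [Ey_of_gt R c b (by omega), Ey_of_gt R c b (by omega), Ey_of_gt R c b (by omega),
          if_neg (by rintro ⟨h, -⟩; omega)]
        ring
      · rcases Nat.even_or_odd (k+1-d) with ⟨e, hke⟩ | ⟨e, hke⟩
        · rcases Nat.eq_zero_or_pos e with rfl | hepos
          · -- e = 0 : d = k+1
            rw [Ey_val R c b (d := d-1) (e := 0) (by omega),
              Ey_of_gt R c b (by omega), Ey_val R c b (d := d) (e := 0) (by omega),
              if_neg (by rintro ⟨h, -⟩; omega)]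
            simp [Pdim_zero]
          · -- e ≥ 1, d ≤ k-1
            obtain ⟨e', rfl⟩ : ∃ e', e = e' + 1 := ⟨e - 1, by omega⟩
            rw [Ey_val R c b (d := d-1) (e := e'+1) (by omega),
              Ey_val R c b (d := d+1) (e := e') (by omega),
              Ey_val R c b (d := d) (k := k+1) (e := e'+1) (by omega)]
            have hd1 : 1 ≤ d := Nat.one_le_iff_ne_zero.2 hd
            rw [show (c + ((d-1:ℕ):ℤ) + 1) = c + d by push_cast [hd1]; ring,
              show (c + ((d+1:ℕ):ℤ) + 1) = c + d + 2 by push_cast; ring]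
            rcases lt_or_ge (c + (d:ℤ)) b with hlt | hge
            · rw [if_neg (by rintro ⟨h1, h2⟩; omega), Pdim_rec R (e := e') hlt]
              ring
            · -- boundary: c+d = b, e' = 0, d = k-1
              have hb : c + (d:ℤ) = b := by omega
              have he1 : e' = 0 := by omega
              subst he1
              rw [if_pos ⟨by omega, by omega⟩,
                Pdim_eq_zero R (i := 1) (le_refl 1) (by omega),
                Pdim_eq_zero R (i := 1) (le_refl 1) (by omega), Pdim_zero,
                show c + (d:ℤ) + 1 = b + 1 by omega]
              ring
        · -- k+1-d odd : all vanish
          rw [Ey_of_odd R c b (d := d-1) (by omega),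
            Ey_of_odd R c b (d := d) (k := k+1) (by omega)]
          have h3 : Ey R c b (d+1) k = 0 := by
            rcases Nat.lt_or_ge k (d+1) with h | h
            · exact Ey_of_gt R c b h
            · exact Ey_of_odd R c b (by omega)
          rw [h3, if_neg (by rintro ⟨h, -⟩; omega)]
          ring

end YMain
section GamExpand
variable {A : Type*} [CommRing A]

/-- the boundary weights -/
def Wf (R : ℤ → A) (g : ℕ → A) (m : ℕ) : ℕ → ℤ → A
  | 0, n => R (n-1) - Vp R g m (n-1) (n-2) + (if n = 0 then 1 else 0)
  | (s+1), n => - Vp R g m (n + 2*((s+1 : ℕ) : ℤ) - 1) (n-2)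

lemma Gam_expand (R : ℤ → A) (g : ℕ → A) (m : ℕ) (k J : ℕ) (hkJ : k ≤ J) (n : ℤ) :
    Gam R g m k n
      = ∑ s ∈ Finset.range (J+1), Zf R (n-1) (n-1) (n-1+2*(s:ℤ)) (2*k) * Wf R g m s n := by
  cases k with
  | zero =>
    rw [Gam, if_pos rfl, Finset.sum_eq_single 0]
    · have hz : Zf R (n-1) (n-1) (n-1+2*((0:ℕ):ℤ)) (2*0) = (1:A) := by
        rw [Zf_zero, if_pos ⟨by push_cast; ring, le_refl _⟩]
      rw [hz, one_mul]
      rfl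
    · intro s hs hne
      have hz : Zf R (n-1) (n-1) (n-1+2*((s:ℕ):ℤ)) (2*0) = (0:A) := by
        rw [Zf_zero, if_neg (by
          rintro ⟨h, -⟩
          have hs0 : (s:ℤ) = 0 := by omega
          exact hne (by exact_mod_cast hs0))]
      rw [hz, zero_mul]
    · intro h
      exact absurd (Finset.mem_range.2 (by omega)) h
  | succ k' =>
    rw [Gam, if_neg (Nat.succ_ne_zero k'),
      Finset.sum_range_succ' (fun s => Zf R (n-1) (n-1) (n-1+2*(s:ℤ)) (2*(k'+1)) * Wf R g m s n) J]
    have h0 : Zf R (n-1) (n-1) (n-1+2*((0:ℕ):ℤ)) (2*(k'+1)) * Wf R g m 0 n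
        = Zwp R (n - 1) (n - 1) (2 * (k'+1)) *
            (R (n - 1) - Vp R g m (n - 1) (n - 2) + (if n = 0 then 1 else 0)) := by
      rw [show (n-1+2*((0:ℕ):ℤ)) = n - 1 by push_cast; ring, Zwp_eq_Zf]
      rfl
    rw [h0]
    have hsum : (∑ s ∈ Finset.range J,
          Zf R (n-1) (n-1) (n-1+2*((s+1:ℕ):ℤ)) (2*(k'+1)) * Wf R g m (s+1) n)
        = - ∑ j ∈ Finset.Icc 1 (k'+1),
            Zwp R (n - 1) (n - 1 + 2 * (j : ℤ)) (2 * (k'+1)) * Vp R g m (n + 2 * (j:ℤ) - 1) (n - 2) := by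
      rw [← Finset.Ico_add_one_right_eq_Icc, Finset.sum_Ico_eq_sum_range,
        show k' + 1 + 1 - 1 = k' + 1 by omega]
      rw [← Finset.sum_subset (Finset.range_subset_range.2 (by omega : k' + 1 ≤ J))]
      · rw [← Finset.sum_neg_distrib]
        apply Finset.sum_congr rfl
        intro s _
        rw [Zwp_eq_Zf, show ((1 + s : ℕ) : ℤ) = ((s + 1 : ℕ) : ℤ) by push_cast; ring]
        show _ = -(Zf R (n-1) (n-1) (n - 1 + 2 * ((s+1:ℕ):ℤ)) (2*(k'+1)) * Vp R g m (n + 2 * ((s+1:ℕ):ℤ) - 1) (n - 2))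
        rw [show (n-1+2*((s+1:ℕ):ℤ)) = (n - 1 + 2 * ((s+1:ℕ):ℤ)) by ring]
        show _ * Wf R g m (s+1) n = _
        rw [show Wf R g m (s+1) n = - Vp R g m (n + 2*((s+1 : ℕ) : ℤ) - 1) (n-2) from rfl]
        ring
      · intro s hs hns
        rw [Zf_of_far R (n-1) (by
          rw [Finset.mem_range] at hs hns
          push_cast
          omega), zero_mul]
    rw [hsum]
    ring

end GamExpand
section ACEval
variable {A : Type*} [CommRing A]

lemma AC_eval (R : ℤ → A) (g : ℕ → A) (m : ℕ) (ν b : ℤ) (k : ℕ)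
    (hb : ν - 1 + 2*(k:ℤ) ≤ b + 2) (hb2 : b + 1 < ν + 2*(k:ℤ)) :
    (∑ i ∈ Finset.range (k+1), (-1:A)^i * Pdim R (ν-1) b i * Gam R g m (k-i) ν)
      = Wf R g m k ν
        + (if b + 2 = ν - 1 + ((2*k : ℕ) : ℤ) ∧ 1 ≤ k then R (b+1) * Wf R g m (k-1) ν else 0) := by
  have hexp : ∀ i ∈ Finset.range (k+1), (-1:A)^i * Pdim R (ν-1) b i * Gam R g m (k-i) ν
      = ∑ s ∈ Finset.range (k+1), (-1:A)^i * Pdim R (ν-1) b i *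
          (Zf R (ν-1) (ν-1) (ν-1+2*(s:ℤ)) (2*(k-i)) * Wf R g m s ν) := by
    intro i hi
    rw [Gam_expand R g m (k-i) k (by omega) ν, Finset.mul_sum]
  rw [Finset.sum_congr rfl hexp, Finset.sum_comm]
  have hinner : ∀ s ∈ Finset.range (k+1),
      (∑ i ∈ Finset.range (k+1), (-1:A)^i * Pdim R (ν-1) b i *
        (Zf R (ν-1) (ν-1) (ν-1+2*(s:ℤ)) (2*(k-i)) * Wf R g m s ν))
      = (Ey R (ν-1) b (2*s) (2*k)
          + (if 2*s + 2 = 2*k ∧ b + 2 = (ν-1) + ((2*k : ℕ) : ℤ) then R (b+1) else 0))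
          * Wf R g m s ν := by
    intro s _
    rw [← Ylem R (2*k) (ν-1) b (2*s) (by push_cast; push_cast at hb; omega)]
    rw [Ysum, Finset.sum_mul]
    rw [← Finset.sum_subset (Finset.range_subset_range.2 (by omega : k+1 ≤ 2*k+1))]
    · apply Finset.sum_congr rfl
      intro i hi
      rw [Finset.mem_range] at hi
      rw [if_pos (by omega : 2*i ≤ 2*k), show 2*k - 2*i = 2*(k-i) by omega,
        show (ν - 1 + ((2*s : ℕ) : ℤ)) = ν - 1 + 2*(s:ℤ) by push_cast; ring]
      ring
    · intro i hi hni
      rw [Finset.mem_range] at hi hni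
      rw [if_neg (by omega), zero_mul]
  rw [Finset.sum_congr rfl hinner]
  have hsplit : ∀ s ∈ Finset.range (k+1),
      (Ey R (ν-1) b (2*s) (2*k)
        + (if 2*s + 2 = 2*k ∧ b + 2 = (ν-1) + ((2*k : ℕ) : ℤ) then R (b+1) else 0))
        * Wf R g m s ν
      = Ey R (ν-1) b (2*s) (2*k) * Wf R g m s ν
        + (if 2*s + 2 = 2*k ∧ b + 2 = (ν-1) + ((2*k : ℕ) : ℤ) then R (b+1) else 0)
          * Wf R g m s ν := fun s _ => by ring
  rw [Finset.sum_congr rfl hsplit, Finset.sum_add_distrib]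
  congr 1
  · -- Ey part: only s = k survives
    rw [Finset.sum_eq_single k]
    · rw [Ey_val R (ν-1) b (d := 2*k) (e := 0) (by omega), Pdim_zero]
      ring
    · intro s hs hne
      rw [Finset.mem_range] at hs
      rw [Ey_val R (ν-1) b (d := 2*s) (e := k - s) (by omega),
        Pdim_eq_zero R (i := k - s) (by omega) (by push_cast; omega)]
      ring
    · intro h
      exact absurd (Finset.mem_range.2 (by omega)) h
  · -- correction part
    by_cases hc : b + 2 = ν - 1 + ((2*k : ℕ) : ℤ) ∧ 1 ≤ k
    · rw [if_pos hc, Finset.sum_eq_single (k-1)]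
      · rw [if_pos ⟨by omega, hc.1⟩]
      · intro s hs hne
        rw [if_neg (by rintro ⟨h1, -⟩; omega), zero_mul]
      · intro h
        exact absurd (Finset.mem_range.2 (by omega)) h
    · rw [if_neg hc]
      apply Finset.sum_eq_zero
      intro s _
      rw [if_neg (by rintro ⟨h1, h2⟩; exact hc ⟨h2, by omega⟩), zero_mul]

end ACEval
section FinalAssembly
variable {A : Type*} [CommRing A]

lemma dagger (R : ℤ → A) (g : ℕ → A) (m : ℕ) (n : ℤ) (hn : 0 ≤ n) (j : ℕ) (hj : 1 ≤ j) :
    Wf R g m j (n+1) - Wf R g m j n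
      + R (n + 2*(j:ℤ) - 1) * Wf R g m (j-1) (n+1)
      - R n * Wf R g m (j-1) (n+2) = 0 := by
  obtain ⟨j', rfl⟩ : ∃ j', j = j' + 1 := ⟨j-1, by omega⟩
  rw [show j' + 1 - 1 = j' by omega]
  have hst := Vp_star R g m (n + 2*((j'+1:ℕ):ℤ) - 1) (n - 1)
  cases j' with
  | zero =>
    have hne1 : ¬((n:ℤ) + 1 = 0) := by omega
    have hne2 : ¬((n:ℤ) + 2 = 0) := by omega
    simp only [Wf, hne1, hne2, if_false]
    push_cast
    push_cast at hst
    ring_nf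
    ring_nf at hst
    linear_combination hst
  | succ s =>
    simp only [Wf]
    push_cast
    push_cast at hst
    ring_nf
    ring_nf at hst
    linear_combination hst

end FinalAssembly
/-- the unconditional difference identity for the `Γ`'s. -/
theorem stmt_8 {A : Type*} [CommRing A] (R : ℤ → A) (m : ℕ) (hm : 1 ≤ m) (g : ℕ → A)
    (n : ℤ) (hn : 0 ≤ n) (j : ℕ) (hj : 1 ≤ j) :
    Gam R g m j (n + 1) - Gam R g m j n =
      (∑ i ∈ Finset.Icc 1 j,
          (-1 : A) ^ (i - 1) * Pdim R n (n + 2 * (j : ℤ) - 2) i *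
            (Gam R g m (j - i) (n + 1) - Gam R g m (j - i) n)) -
        ∑ i ∈ Finset.Icc 1 j,
          (-1 : A) ^ i * R n * Pdim R (n + 1) (n + 2 * (j : ℤ) - 2) (i - 1) *
            (Gam R g m (j - i) (n + 2) - Gam R g m (j - i) n) := by
  -- canonical sums
  have hIcc1 : (∑ i ∈ Finset.Icc 1 j,
        (-1 : A) ^ (i - 1) * Pdim R n (n + 2 * (j : ℤ) - 2) i *
          (Gam R g m (j - i) (n + 1) - Gam R g m (j - i) n))
      = -((∑ s ∈ Finset.range j, (-1:A)^(s+1) * Pdim R n (n + 2*(j:ℤ) - 2) (s+1) *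
            Gam R g m (j-(s+1)) (n+1))
          - ∑ s ∈ Finset.range j, (-1:A)^(s+1) * Pdim R n (n + 2*(j:ℤ) - 2) (s+1) *
            Gam R g m (j-(s+1)) n) := by
    rw [← Finset.Ico_add_one_right_eq_Icc, Finset.sum_Ico_eq_sum_range, show j+1-1 = j by omega,
      ← Finset.sum_sub_distrib, ← Finset.sum_neg_distrib]
    apply Finset.sum_congr rfl
    intro s _
    rw [Nat.add_comm 1 s, show s+1-1 = s by omega, pow_succ]
    ring
  have hIcc2 : (∑ i ∈ Finset.Icc 1 j,
        (-1 : A) ^ i * R n * Pdim R (n + 1) (n + 2 * (j : ℤ) - 2) (i - 1) *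
          (Gam R g m (j - i) (n + 2) - Gam R g m (j - i) n))
      = R n * ((∑ s ∈ Finset.range j, (-1:A)^(s+1) * Pdim R (n+1) (n + 2*(j:ℤ) - 2) s *
            Gam R g m (j-(s+1)) (n+2))
          - ∑ s ∈ Finset.range j, (-1:A)^(s+1) * Pdim R (n+1) (n + 2*(j:ℤ) - 2) s *
            Gam R g m (j-(s+1)) n) := by
    rw [← Finset.Ico_add_one_right_eq_Icc, Finset.sum_Ico_eq_sum_range, show j+1-1 = j by omega,
      ← Finset.sum_sub_distrib, Finset.mul_sum]
    apply Finset.sum_congr rfl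
    intro s _
    rw [Nat.add_comm 1 s, show s+1-1 = s by omega]
    ring
  rw [hIcc1, hIcc2]
  -- AC evaluations
  have hAC1 : (∑ s ∈ Finset.range j, (-1:A)^(s+1) * Pdim R n (n + 2*(j:ℤ) - 2) (s+1) *
        Gam R g m (j-(s+1)) (n+1)) + Gam R g m j (n+1)
      = Wf R g m j (n+1) + R (n + 2*(j:ℤ) - 1) * Wf R g m (j-1) (n+1) := by
    have h := AC_eval R g m (n+1) (n + 2*(j:ℤ) - 2) j (by push_cast; omega) (by push_cast; omega)
    rw [show ((n:ℤ)+1-1) = n by ring, if_pos ⟨by push_cast; ring, hj⟩,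
      show (n + 2*(j:ℤ) - 2 + 1) = n + 2*(j:ℤ) - 1 by ring,
      Finset.sum_range_succ'] at h
    simpa [Pdim_zero] using h
  have hAC2 : (∑ s ∈ Finset.range j, (-1:A)^(s+1) * Pdim R (n-1) (n + 2*(j:ℤ) - 2) (s+1) *
        Gam R g m (j-(s+1)) n) + Gam R g m j n
      = Wf R g m j n := by
    have h := AC_eval R g m n (n + 2*(j:ℤ) - 2) j (by push_cast; omega) (by push_cast; omega)
    rw [if_neg (by rintro ⟨h1, -⟩; push_cast at h1; omega), add_zero,
      Finset.sum_range_succ'] at h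
    simpa [Pdim_zero] using h
  have hsplit : (∑ s ∈ Finset.range j, (-1:A)^(s+1) * Pdim R (n-1) (n + 2*(j:ℤ) - 2) (s+1) *
        Gam R g m (j-(s+1)) n)
      = (∑ s ∈ Finset.range j, (-1:A)^(s+1) * Pdim R n (n + 2*(j:ℤ) - 2) (s+1) *
          Gam R g m (j-(s+1)) n)
        + R n * (∑ s ∈ Finset.range j, (-1:A)^(s+1) * Pdim R (n+1) (n + 2*(j:ℤ) - 2) s *
          Gam R g m (j-(s+1)) n) := by
    rw [Finset.mul_sum, ← Finset.sum_add_distrib]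
    apply Finset.sum_congr rfl
    intro s _
    rw [Pdim_rec R (e := s) (by omega), show (n - 1 + 1 : ℤ) = n by ring,
      show (n - 1 + 2 : ℤ) = n + 1 by ring]
    ring
  have hAC3 : (∑ s ∈ Finset.range j, (-1:A)^(s+1) * Pdim R (n+1) (n + 2*(j:ℤ) - 2) s *
        Gam R g m (j-(s+1)) (n+2))
      = - Wf R g m (j-1) (n+2) := by
    have h := AC_eval R g m (n+2) (n + 2*(j:ℤ) - 2) (j-1) (by push_cast; omega)
      (by push_cast; omega)
    rw [show ((n:ℤ)+2-1) = n + 1 by ring,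
      if_neg (by rintro ⟨h1, -⟩; push_cast at h1; omega), add_zero,
      show j - 1 + 1 = j by omega] at h
    rw [← h, ← Finset.sum_neg_distrib]
    apply Finset.sum_congr rfl
    intro s _
    rw [show j - 1 - s = j - (s+1) by omega, pow_succ]
    ring
  have hdag := dagger R g m n hn j hj
  linear_combination hAC1 - hAC2 + hsplit + R n * hAC3 + hdag
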